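/- Consistency of the shear-rate projection splitting: Let d ≥ 1, let Ω ⊆ ℝ^d be open, and let ρ > 0, Δt > 0 be real constants. Suppose ũ, u, uⁿ, uⁿ⁻¹ : ℝ^d → ℝ^d are twice continuously differentiable vector fields, a, b : ℝ^d → ℝ are continuously differentiable scalar fields, p, φ, ψ : ℝ^d → ℝ are continuously differentiable scalar fields, and f : ℝ^d → ℝ^d is any function, such that at every point of Ω: (i) ρ(3ũ − 4uⁿ + uⁿ⁻¹)/(2Δt) + ρ(ũ·∇)ũ − ∇·(2b D(ũ)) + ∇p = f (the prediction equation); (ii) u = ũ − (2Δt/(3ρ))∇φ (the velocity correction); (iii) ∇ψ = ∇·(2a D(u)) − ∇·(2b D(ũ)) (the shear-rate correction equation). Then the updated pressure q := p + φ + ψ satisfies, at every point of Ω, the full momentum equation ρ(3u − 4uⁿ + uⁿ⁻¹)/(2Δt) + ρ(ũ·∇)ũ − ∇·(2a D(u)) + ∇q = f. -/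

import Mathlib

/-- Partial derivative `∂_j g` of a scalar field on `ℝ^d`. -/
noncomputable def pdiff {d : ℕ} (j : Fin d) (g : (Fin d → ℝ) → ℝ) (x : Fin d → ℝ) : ℝ :=
  fderiv ℝ g x (Pi.single j 1)

/-- Shear-rate tensor `D(v)_{ij} = (∂_j v_i + ∂_i v_j)/2` of a vector field. -/
noncomputable def shearD {d : ℕ} (v : (Fin d → ℝ) → (Fin d → ℝ)) (i j : Fin d)
    (x : Fin d → ℝ) : ℝ :=
  (pdiff j (fun y => v y i) x + pdiff i (fun y => v y j) x) / 2

/-- Consistency of the shear-rate projection splitting: combining the prediction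
equation, the velocity correction and the shear-rate correction equation, the updated
pressure `q = p + φ + ψ` satisfies the full momentum equation on `Ω`. -/
theorem shear_rate_projection_consistency
    (d : ℕ) (hd : 1 ≤ d) (Ω : Set (Fin d → ℝ)) (hΩ : IsOpen Ω)
    (ρ dt : ℝ) (hρ : 0 < ρ) (hdt : 0 < dt)
    (ut u un un1 : (Fin d → ℝ) → (Fin d → ℝ))
    (a b : (Fin d → ℝ) → ℝ)
    (p φ ψ : (Fin d → ℝ) → ℝ)
    (f : (Fin d → ℝ) → (Fin d → ℝ))
    (hut : ContDiff ℝ 2 ut) (hu : ContDiff ℝ 2 u)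
    (hun : ContDiff ℝ 2 un) (hun1 : ContDiff ℝ 2 un1)
    (ha : ContDiff ℝ 1 a) (hb : ContDiff ℝ 1 b)
    (hp : ContDiff ℝ 1 p) (hφ : ContDiff ℝ 1 φ) (hψ : ContDiff ℝ 1 ψ)
    -- (i) prediction equation
    (hpred : ∀ x ∈ Ω, ∀ i,
      ρ * (3 * ut x i - 4 * un x i + un1 x i) / (2 * dt)
        + ρ * (∑ j, ut x j * pdiff j (fun y => ut y i) x)
        - (∑ j, pdiff j (fun y => 2 * b y * shearD ut i j y) x)
        + pdiff i p x = f x i)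
    -- (ii) velocity correction
    (hcorr : ∀ x ∈ Ω, ∀ i,
      u x i = ut x i - (2 * dt / (3 * ρ)) * pdiff i φ x)
    -- (iii) shear-rate correction equation
    (hpsi : ∀ x ∈ Ω, ∀ i,
      pdiff i ψ x = (∑ j, pdiff j (fun y => 2 * a y * shearD u i j y) x)
        - (∑ j, pdiff j (fun y => 2 * b y * shearD ut i j y) x)) :
    -- conclusion: full momentum equation for q = p + φ + ψ
    ∀ x ∈ Ω, ∀ i,
      ρ * (3 * u x i - 4 * un x i + un1 x i) / (2 * dt)
        + ρ * (∑ j, ut x j * pdiff j (fun y => ut y i) x)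
        - (∑ j, pdiff j (fun y => 2 * a y * shearD u i j y) x)
        + pdiff i (fun y => p y + φ y + ψ y) x = f x i := by
  intro x hx i
  have hdp := (hp.differentiable one_ne_zero).differentiableAt (x := x)
  have hdφ := (hφ.differentiable one_ne_zero).differentiableAt (x := x)
  have hdψ := (hψ.differentiable one_ne_zero).differentiableAt (x := x)
  have hsum : pdiff i (fun y => p y + φ y + ψ y) x
      = pdiff i p x + pdiff i φ x + pdiff i ψ x := by
    simp only [pdiff]
    rw [fderiv_fun_add (f := fun y => p y + φ y) (hdp.add hdφ) hdψ, fderiv_fun_add hdp hdφ]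
    simp
  rw [hsum, hcorr x hx i, hpsi x hx i]
  have hpr := hpred x hx i
  have h1 : ρ * (3 * (ut x i - 2 * dt / (3 * ρ) * pdiff i φ x) - 4 * un x i + un1 x i)
      / (2 * dt)
      = ρ * (3 * ut x i - 4 * un x i + un1 x i) / (2 * dt) - pdiff i φ x := by
    field_simp
    ring
  rw [h1]
  linarith
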